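/- Let φ ∈ ℝ⟦λ⟧ be the unique formal power series with constant coefficient 0 satisfying φ = λ·(1+φ)⁴, and let Φ denote its image in ℝ⟦s,λ⟧. Set G := [1 + λs + s + (1+λs)·Φ·(1 − Φ − Φ²)]² − 4s·(1+λs)², and let F ∈ ℝ⟦s,λ⟧ be the unique formal power series with constant coefficient 1 satisfying F² = G. Then there exist a nonzero polynomial B ∈ ℝ[s,λ] and a polynomial A ∈ ℝ[s,λ,z] of degree at most 3 in the variable z such that B(s,λ)·(∂F/∂λ) = A(s,λ,Φ)·F holds in ℝ⟦s,λ⟧, where A(s,λ,Φ) means the element of ℝ⟦s,λ⟧ obtained by substituting Φ for z in A, and ∂F/∂λ is the formal partial derivative of F with respect to λ. -/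

import Mathlib

open PowerSeries

set_option maxHeartbeats 4000000
set_option maxRecDepth 8000

/-- The variable `s` in `(ℝ⟦s⟧)⟦λ⟧`. -/
noncomputable def sVar : PowerSeries (PowerSeries ℝ) :=
  PowerSeries.C (R := PowerSeries ℝ) PowerSeries.X

/-- The variable `λ` in `(ℝ⟦s⟧)⟦λ⟧`. -/
noncomputable def lVar : PowerSeries (PowerSeries ℝ) :=
  PowerSeries.X

/-- The natural inclusion `ℝ[s,λ] = (ℝ[s])[λ] →+* (ℝ⟦s⟧)⟦λ⟧ = ℝ⟦s,λ⟧`. -/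
noncomputable def polyToSeries : Polynomial (Polynomial ℝ) →+* PowerSeries (PowerSeries ℝ) :=
  (Polynomial.coeToPowerSeries.ringHom).comp
    (Polynomial.mapRingHom Polynomial.coeToPowerSeries.ringHom)

noncomputable def sB : Polynomial (Polynomial ℝ) := Polynomial.C Polynomial.X
noncomputable def lB : Polynomial (Polynomial ℝ) := Polynomial.X
noncomputable def sA : Polynomial (Polynomial (Polynomial ℝ)) :=
  Polynomial.C (Polynomial.C Polynomial.X)
noncomputable def lA : Polynomial (Polynomial (Polynomial ℝ)) := Polynomial.C Polynomial.X
noncomputable def zA : Polynomial (Polynomial (Polynomial ℝ)) := Polynomial.X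

noncomputable def Bpoly : Polynomial (Polynomial ℝ) :=
  -1 + 32*lB - 256*lB^2 + 1*sB - 36*sB*lB + 512*sB*lB^2 - 2048*sB*lB^3 - 134*sB^2*lB^2 + 1888*sB^2*lB^3 - 7168*sB^2*lB^4 - 164*sB^3*lB^3 + 3136*sB^3*lB^4 - 14336*sB^3*lB^5 - 65*sB^4*lB^4 + 2784*sB^4*lB^5 - 17920*sB^4*lB^6 + 1408*sB^5*lB^6 - 14336*sB^5*lB^7 + 416*sB^6*lB^7 - 7168*sB^6*lB^8 + 64*sB^7*lB^8 - 2048*sB^7*lB^9 - 256*sB^8*lB^10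

noncomputable def Apoly : Polynomial (Polynomial (Polynomial ℝ)) :=
  -1 + 11*zA + 5*zA^2 + 1*zA^3 + 16*lA - 176*lA*zA - 80*lA*zA^2 - 16*lA*zA^3 - 3*sA - 11*sA*zA - 5*sA*zA^2 - 1*sA*zA^3 + 100*sA*lA + 268*sA*lA*zA + 120*sA*lA*zA^2 + 24*sA*lA*zA^3 - 672*sA*lA^2 - 2144*sA*lA^2*zA - 1056*sA*lA^2*zA^2 - 224*sA*lA^2*zA^3 - 4*sA^2*lA - 24*sA^2*lA*zA - 4*sA^2*lA*zA^2 + 534*sA^2*lA^2 + 1030*sA^2*lA^2*zA + 386*sA^2*lA^2*zA^2 + 66*sA^2*lA^2*zA^3 - 3920*sA^2*lA^3 - 7312*sA^2*lA^3*zA - 3056*sA^2*lA^3*zA^2 - 560*sA^2*lA^3*zA^3 - 12*sA^3*lA^2*zA + 1024*sA^3*lA^3 + 1752*sA^3*lA^3*zA + 520*sA^3*lA^3*zA^2 + 64*sA^3*lA^3*zA^3 - 9472*sA^3*lA^4 - 11328*sA^3*lA^4*zA - 3008*sA^3*lA^4*zA^2 - 256*sA^3*lA^4*zA^3 + 851*sA^4*lA^4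 + 1527*sA^4*lA^4*zA + 337*sA^4*lA^4*zA^2 + 21*sA^4*lA^4*zA^3 - 12944*sA^4*lA^5 - 8912*sA^4*lA^5*zA + 208*sA^4*lA^5*zA^2 + 656*sA^4*lA^5*zA^3 + 260*sA^5*lA^5 + 644*sA^5*lA^5*zA + 88*sA^5*lA^5*zA^2 - 11040*sA^5*lA^6 - 3424*sA^5*lA^6*zA + 2272*sA^5*lA^6*zA^2 + 928*sA^5*lA^6*zA^3 + 96*sA^6*lA^6*zA - 5936*sA^6*lA^7 - 496*sA^6*lA^7*zA + 1392*sA^6*lA^7*zA^2 + 432*sA^6*lA^7*zA^3 - 1856*sA^7*lA^8 + 256*sA^7*lA^8*zA^2 + 64*sA^7*lA^8*zA^3 - 256*sA^8*lA^9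

theorem holonomic_first_derivative
    (φ : PowerSeries ℝ)
    (hφ0 : constantCoeff (R := ℝ) φ = 0)
    (hφ : φ = PowerSeries.X * (1 + φ) ^ 4)
    (Φ F : PowerSeries (PowerSeries ℝ))
    (hΦ : Φ = PowerSeries.map (PowerSeries.C (R := ℝ)) φ)
    (hF1 : constantCoeff (R := ℝ) (constantCoeff (R := PowerSeries ℝ) F) = 1)
    (hF2 : F ^ 2 =
      (1 + lVar * sVar + sVar + (1 + lVar * sVar) * Φ * (1 - Φ - Φ ^ 2)) ^ 2
        - 4 * sVar * (1 + lVar * sVar) ^ 2) :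
    ∃ (B : Polynomial (Polynomial ℝ)) (A : Polynomial (Polynomial (Polynomial ℝ))),
      B ≠ 0 ∧ A.natDegree ≤ 3 ∧
      polyToSeries B * (d⁄dX (PowerSeries ℝ) F) =
        Polynomial.eval₂ polyToSeries Φ A * F := by
  classical
  have hΦrel : Φ = lVar * (1 + Φ) ^ 4 := by
    rw [hΦ]
    nth_rewrite 1 [hφ]
    rw [map_mul, map_pow, map_add, map_one, PowerSeries.map_X]
    rfl
  have hdl : d⁄dX (PowerSeries ℝ) lVar = 1 := PowerSeries.derivative_X
  have hds : d⁄dX (PowerSeries ℝ) sVar = 0 := PowerSeries.derivative_C (r := _)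
  have hd4 : d⁄dX (PowerSeries ℝ) (4 : PowerSeries (PowerSeries ℝ)) = 0 := by
    rw [show (4 : PowerSeries (PowerSeries ℝ)) = PowerSeries.C (R := PowerSeries ℝ) 4 from
      (map_ofNat (PowerSeries.C (R := PowerSeries ℝ)) 4).symm, PowerSeries.derivative_C]
  have hd : d⁄dX (PowerSeries ℝ) Φ
      = (1 + Φ) ^ 4 + lVar * (4 * (1 + Φ) ^ 3 * d⁄dX (PowerSeries ℝ) Φ) := by
    conv_lhs => rw [hΦrel]
    simp only [Derivation.leibniz, Derivation.leibniz_pow, map_add,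
      Derivation.map_one_eq_zero, hdl, smul_eq_mul, nsmul_eq_mul, Nat.cast_ofNat,
      zero_add, add_zero, mul_zero, mul_one]
    ring
  have hDP : (1 - 3 * Φ) * d⁄dX (PowerSeries ℝ) Φ = (1 + Φ) ^ 5 := by
    linear_combination (1 + Φ) * hd - 4 * (d⁄dX (PowerSeries ℝ) Φ) * hΦrel
  have hFD : 2 * F * d⁄dX (PowerSeries ℝ) F =
      2 * (1 + lVar * sVar + sVar + (1 + lVar * sVar) * Φ * (1 - Φ - Φ ^ 2)) *
        (sVar + sVar * Φ * (1 - Φ - Φ ^ 2) +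
          (1 + lVar * sVar) * ((d⁄dX (PowerSeries ℝ) Φ) * (1 - Φ - Φ ^ 2)
            - Φ * ((d⁄dX (PowerSeries ℝ) Φ) + 2 * Φ * (d⁄dX (PowerSeries ℝ) Φ))))
        - 8 * sVar ^ 2 * (1 + lVar * sVar) := by
    have h := congrArg (d⁄dX (PowerSeries ℝ)) hF2
    simp only [Derivation.leibniz, Derivation.leibniz_pow, map_add, map_sub,
      Derivation.map_one_eq_zero, hdl, hds, hd4,
      smul_eq_mul, nsmul_eq_mul, Nat.cast_ofNat, zero_add, add_zero, mul_zero, zero_mul,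
      mul_one, one_mul] at h
    linear_combination h
  have hΦ0 : constantCoeff (R := PowerSeries ℝ) Φ = 0 := by
    rw [hΦ, ← PowerSeries.coeff_zero_eq_constantCoeff, PowerSeries.coeff_map,
      PowerSeries.coeff_zero_eq_constantCoeff, hφ0, map_zero]
  have hF0 : F ≠ 0 := by
    intro h
    rw [h] at hF1
    simp at hF1
  have hu0 : (2 : PowerSeries (PowerSeries ℝ)) * (1 - 3 * Φ) * F ≠ 0 := by
    have h2 : (2 : PowerSeries (PowerSeries ℝ)) ≠ 0 := by
      intro h
      have h' := congrArg (constantCoeff (R := ℝ) ∘ constantCoeff (R := PowerSeries ℝ)) h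
      simp only [Function.comp_apply, map_ofNat, map_zero] at h'
      norm_num at h'
    have h3 : (1 - 3 * Φ : PowerSeries (PowerSeries ℝ)) ≠ 0 := by
      intro h
      have h' := congrArg (constantCoeff (R := PowerSeries ℝ)) h
      rw [map_sub, map_mul, map_one, hΦ0, mul_zero, sub_zero, map_zero] at h'
      exact one_ne_zero h'
    exact mul_ne_zero (mul_ne_zero h2 h3) hF0
  have hpl : polyToSeries lB = lVar := by simp [polyToSeries, lVar, lB]
  have hps : polyToSeries sB = sVar := by simp [polyToSeries, sVar, sB]
  have hel : Polynomial.eval₂ polyToSeries Φ lA = lVar := by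
    rw [lA, Polynomial.eval₂_C]; exact hpl
  have hes : Polynomial.eval₂ polyToSeries Φ sA = sVar := by
    rw [sA, Polynomial.eval₂_C]; exact hps
  have hez : Polynomial.eval₂ polyToSeries Φ zA = Φ := Polynomial.eval₂_X _ _
  have hBs : polyToSeries Bpoly = (-1 + 32*lVar - 256*lVar^2 + 1*sVar - 36*sVar*lVar + 512*sVar*lVar^2 - 2048*sVar*lVar^3 - 134*sVar^2*lVar^2 + 1888*sVar^2*lVar^3 - 7168*sVar^2*lVar^4 - 164*sVar^3*lVar^3 + 3136*sVar^3*lVar^4 - 14336*sVar^3*lVar^5 - 65*sVar^4*lVar^4 + 2784*sVar^4*lVar^5 - 17920*sVar^4*lVar^6 + 1408*sVar^5*lVar^6 - 14336*sVar^5*lVar^7 + 416*sVar^6*lVar^7 - 7168*sVar^6*lVar^8 + 64*sVar^7*lVar^8 - 2048*sVar^7*lVar^9 - 256*sVar^8*lVar^10) := by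
    rw [Bpoly]
    simp only [map_add, map_sub, map_mul, map_pow, map_neg, map_one, map_ofNat, hpl, hps]
  have hAs : Polynomial.eval₂ polyToSeries Φ Apoly = (-1 + 11*Φ + 5*Φ^2 + 1*Φ^3 + 16*lVar - 176*lVar*Φ - 80*lVar*Φ^2 - 16*lVar*Φ^3 - 3*sVar - 11*sVar*Φ - 5*sVar*Φ^2 - 1*sVar*Φ^3 + 100*sVar*lVar + 268*sVar*lVar*Φ + 120*sVar*lVar*Φ^2 + 24*sVar*lVar*Φ^3 - 672*sVar*lVar^2 - 2144*sVar*lVar^2*Φ - 1056*sVar*lVar^2*Φ^2 - 224*sVar*lVar^2*Φ^3 - 4*sVar^2*lVar - 24*sVar^2*lVar*Φ - 4*sVar^2*lVar*Φ^2 + 534*sVar^2*lVar^2 + 1030*sVar^2*lVar^2*Φ + 386*sVar^2*lVar^2*Φ^2 + 66*sVar^2*lVar^2*Φ^3 - 3920*sVar^2*lVar^3 - 7312*sVar^2*lVar^3*Φ - 3056*sVar^2*lVar^3*Φ^2 - 560*sVar^2*lVar^3*Φ^3 - 12*sVar^3*lVar^2*Φ + 1024*sVar^3*lVar^3 + 1752*sVar^3*lVar^3*Φ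 + 520*sVar^3*lVar^3*Φ^2 + 64*sVar^3*lVar^3*Φ^3 - 9472*sVar^3*lVar^4 - 11328*sVar^3*lVar^4*Φ - 3008*sVar^3*lVar^4*Φ^2 - 256*sVar^3*lVar^4*Φ^3 + 851*sVar^4*lVar^4 + 1527*sVar^4*lVar^4*Φ + 337*sVar^4*lVar^4*Φ^2 + 21*sVar^4*lVar^4*Φ^3 - 12944*sVar^4*lVar^5 - 8912*sVar^4*lVar^5*Φ + 208*sVar^4*lVar^5*Φ^2 + 656*sVar^4*lVar^5*Φ^3 + 260*sVar^5*lVar^5 + 644*sVar^5*lVar^5*Φ + 88*sVar^5*lVar^5*Φ^2 - 11040*sVar^5*lVar^6 - 3424*sVar^5*lVar^6*Φ + 2272*sVar^5*lVar^6*Φ^2 + 928*sVar^5*lVar^6*Φ^3 + 96*sVar^6*lVar^6*Φ - 5936*sVar^6*lVar^7 - 496*sVar^6*lVar^7*Φ + 1392*sVar^6*lVar^7*Φ^2 + 432*sVar^6*lVar^7*Φ^3 - 1856*sVar^7*lVar^8 + 256*sVar^7*lVar^8*Φ^2 + 64*sVar^7*lVar^8*Φ^3 - 256*sVar^8*lVar^9)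 := by
    rw [Apoly]
    simp only [Polynomial.eval₂_add, Polynomial.eval₂_sub, Polynomial.eval₂_mul,
      Polynomial.eval₂_pow, Polynomial.eval₂_neg,
      Polynomial.eval₂_one, Polynomial.eval₂_ofNat, hel, hes, hez]
  refine ⟨Bpoly, Apoly, ?_, ?_, ?_⟩
  · intro h
    have h1 := congrArg (fun p => Polynomial.eval (1 : ℝ)
      (Polynomial.eval (Polynomial.C (1 : ℝ)) p)) h
    simp only [Bpoly, sB, lB] at h1
    norm_num at h1
  · rw [Apoly, sA, lA, zA]
    compute_degree
  · apply mul_left_cancel₀ hu0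
    rw [hBs, hAs]
    linear_combination ((1 - 3 * Φ) * (-1 + 32*lVar - 256*lVar^2 + 1*sVar - 36*sVar*lVar + 512*sVar*lVar^2 - 2048*sVar*lVar^3 - 134*sVar^2*lVar^2 + 1888*sVar^2*lVar^3 - 7168*sVar^2*lVar^4 - 164*sVar^3*lVar^3 + 3136*sVar^3*lVar^4 - 14336*sVar^3*lVar^5 - 65*sVar^4*lVar^4 + 2784*sVar^4*lVar^5 - 17920*sVar^4*lVar^6 + 1408*sVar^5*lVar^6 - 14336*sVar^5*lVar^7 + 416*sVar^6*lVar^7 - 7168*sVar^6*lVar^8 + 64*sVar^7*lVar^8 - 2048*sVar^7*lVar^9 - 256*sVar^8*lVar^10)) * hFD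
      - (2 * (1 - 3 * Φ) * (-1 + 11*Φ + 5*Φ^2 + 1*Φ^3 + 16*lVar - 176*lVar*Φ - 80*lVar*Φ^2 - 16*lVar*Φ^3 - 3*sVar - 11*sVar*Φ - 5*sVar*Φ^2 - 1*sVar*Φ^3 + 100*sVar*lVar + 268*sVar*lVar*Φ + 120*sVar*lVar*Φ^2 + 24*sVar*lVar*Φ^3 - 672*sVar*lVar^2 - 2144*sVar*lVar^2*Φ - 1056*sVar*lVar^2*Φ^2 - 224*sVar*lVar^2*Φ^3 - 4*sVar^2*lVar - 24*sVar^2*lVar*Φ - 4*sVar^2*lVar*Φ^2 + 534*sVar^2*lVar^2 + 1030*sVar^2*lVar^2*Φ + 386*sVar^2*lVar^2*Φ^2 + 66*sVar^2*lVar^2*Φ^3 - 3920*sVar^2*lVar^3 - 7312*sVar^2*lVar^3*Φ - 3056*sVar^2*lVar^3*Φ^2 - 560*sVar^2*lVar^3*Φ^3 - 12*sVar^3*lVar^2*Φ + 1024*sVar^3*lVar^3 + 1752*sVar^3*lVar^3*Φ + 520*sVar^3*lVar^3*Φ^2 + 64*sVar^3*lVar^3*Φ^3 - 9472*sVar^3*lVar^4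 - 11328*sVar^3*lVar^4*Φ - 3008*sVar^3*lVar^4*Φ^2 - 256*sVar^3*lVar^4*Φ^3 + 851*sVar^4*lVar^4 + 1527*sVar^4*lVar^4*Φ + 337*sVar^4*lVar^4*Φ^2 + 21*sVar^4*lVar^4*Φ^3 - 12944*sVar^4*lVar^5 - 8912*sVar^4*lVar^5*Φ + 208*sVar^4*lVar^5*Φ^2 + 656*sVar^4*lVar^5*Φ^3 + 260*sVar^5*lVar^5 + 644*sVar^5*lVar^5*Φ + 88*sVar^5*lVar^5*Φ^2 - 11040*sVar^5*lVar^6 - 3424*sVar^5*lVar^6*Φ + 2272*sVar^5*lVar^6*Φ^2 + 928*sVar^5*lVar^6*Φ^3 + 96*sVar^6*lVar^6*Φ - 5936*sVar^6*lVar^7 - 496*sVar^6*lVar^7*Φ + 1392*sVar^6*lVar^7*Φ^2 + 432*sVar^6*lVar^7*Φ^3 - 1856*sVar^7*lVar^8 + 256*sVar^7*lVar^8*Φ^2 + 64*sVar^7*lVar^8*Φ^3 - 256*sVar^8*lVar^9)) * hF2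
      + (-32 + 224*Φ^2 + 256*Φ^3 - 96*Φ^4 - 256*Φ^5 - 96*Φ^6 + 512*lVar - 3584*lVar*Φ^2 - 4096*lVar*Φ^3 + 1536*lVar*Φ^4 + 4096*lVar*Φ^5 + 1536*lVar*Φ^6 + 80*sVar - 208*sVar*Φ - 72*sVar*Φ^2 - 112*sVar*Φ^3 + 48*sVar*Φ^4 + 192*sVar*Φ^5 + 72*sVar*Φ^6 - 1408*sVar*lVar + 3456*sVar*lVar*Φ + 2176*sVar*lVar*Φ^2 + 2048*sVar*lVar*Φ^3 - 2944*sVar*lVar*Φ^4 - 5504*sVar*lVar*Φ^5 - 1920*sVar*lVar*Φ^6 + 5120*sVar*lVar^2 - 35840*sVar*lVar^2*Φ^2 - 40960*sVar*lVar^2*Φ^3 + 15360*sVar*lVar^2*Φ^4 + 40960*sVar*lVar^2*Φ^5 + 15360*sVar*lVar^2*Φ^6 - 40*sVar^2 + 152*sVar^2*Φ - 104*sVar^2*Φ^2 - 8*sVar^2*Φ^3 + 88*sVar^2*Φ^4 + 24*sVar^2*Φ^5 + 664*sVar^2*lVar - 2960*sVar^2*lVar*Φ + 2776*sVar^2*lVar*Φ^2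 + 416*sVar^2*lVar*Φ^3 - 536*sVar^2*lVar*Φ^4 + 1136*sVar^2*lVar*Φ^5 + 552*sVar^2*lVar*Φ^6 - 7168*sVar^2*lVar^2 + 24320*sVar^2*lVar^2*Φ - 7936*sVar^2*lVar^2*Φ^2 + 5632*sVar^2*lVar^2*Φ^3 - 10240*sVar^2*lVar^2*Φ^4 - 29952*sVar^2*lVar^2*Φ^5 - 11520*sVar^2*lVar^2*Φ^6 + 23040*sVar^2*lVar^3 - 161280*sVar^2*lVar^3*Φ^2 - 184320*sVar^2*lVar^3*Φ^3 + 69120*sVar^2*lVar^3*Φ^4 + 184320*sVar^2*lVar^3*Φ^5 + 69120*sVar^2*lVar^3*Φ^6 + 24*sVar^3 - 64*sVar^3*Φ - 24*sVar^3*Φ^2 - 688*sVar^3*lVar + 2136*sVar^3*lVar*Φ - 160*sVar^3*lVar*Φ^2 - 256*sVar^3*lVar*Φ^3 + 248*sVar^3*lVar*Φ^4 + 48*sVar^3*lVar*Φ^5 + 5000*sVar^3*lVar^2 - 21760*sVar^3*lVar^2*Φ + 18224*sVar^3*lVar^2*Φ^2 + 7248*sVar^3*lVar^2*Φ^3 -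 4104*sVar^3*lVar^2*Φ^4 + 2096*sVar^3*lVar^2*Φ^5 + 1488*sVar^3*lVar^2*Φ^6 - 13952*sVar^3*lVar^3 + 74496*sVar^3*lVar^3*Φ - 96128*sVar^3*lVar^3*Φ^2 + 5632*sVar^3*lVar^3*Φ^3 - 2432*sVar^3*lVar^3*Φ^4 - 80128*sVar^3*lVar^3*Φ^5 - 34944*sVar^3*lVar^3*Φ^6 + 61440*sVar^3*lVar^4 - 430080*sVar^3*lVar^4*Φ^2 - 491520*sVar^3*lVar^4*Φ^3 + 184320*sVar^3*lVar^4*Φ^4 + 491520*sVar^3*lVar^4*Φ^5 + 184320*sVar^3*lVar^4*Φ^6 + 48*sVar^4*lVar - 136*sVar^4*lVar*Φ - 24*sVar^4*lVar*Φ^2 - 2536*sVar^4*lVar^2 + 7464*sVar^4*lVar^2*Φ + 656*sVar^4*lVar^2*Φ^2 - 752*sVar^4*lVar^2*Φ^3 + 232*sVar^4*lVar^2*Φ^4 + 24*sVar^4*lVar^2*Φ^5 + 18736*sVar^4*lVar^3 - 74816*sVar^4*lVar^3*Φ + 48304*sVar^4*lVar^3*Φ^2 + 25952*sVar^4*lVar^3*Φ^3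 - 10672*sVar^4*lVar^3*Φ^4 + 864*sVar^4*lVar^3*Φ^5 + 1872*sVar^4*lVar^3*Φ^6 - 7488*sVar^4*lVar^4 + 129792*sVar^4*lVar^4*Φ - 321088*sVar^4*lVar^4*Φ^2 - 2048*sVar^4*lVar^4*Φ^3 + 47680*sVar^4*lVar^4*Φ^4 - 127744*sVar^4*lVar^4*Φ^5 - 63168*sVar^4*lVar^4*Φ^6 + 107520*sVar^4*lVar^5 - 752640*sVar^4*lVar^5*Φ^2 - 860160*sVar^4*lVar^5*Φ^3 + 322560*sVar^4*lVar^5*Φ^4 + 860160*sVar^4*lVar^5*Φ^5 + 322560*sVar^4*lVar^5*Φ^6 + 24*sVar^5*lVar^2 - 72*sVar^5*lVar^2*Φ - 4072*sVar^5*lVar^3 + 11664*sVar^5*lVar^3*Φ + 1904*sVar^5*lVar^3*Φ^2 - 768*sVar^5*lVar^3*Φ^3 + 72*sVar^5*lVar^3*Φ^4 + 36320*sVar^5*lVar^4 - 136912*sVar^5*lVar^4*Φ + 70680*sVar^5*lVar^4*Φ^2 + 44336*sVar^5*lVar^4*Φ^3 - 14048*sVar^5*lVar^4*Φ^4 - 1504*sVar^5*lVar^4*Φ^5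 + 1128*sVar^5*lVar^4*Φ^6 + 16000*sVar^5*lVar^5 + 140800*sVar^5*lVar^5*Φ - 569984*sVar^5*lVar^5*Φ^2 - 8704*sVar^5*lVar^5*Φ^3 + 110464*sVar^5*lVar^5*Φ^4 - 132096*sVar^5*lVar^5*Φ^5 - 72576*sVar^5*lVar^5*Φ^6 + 129024*sVar^5*lVar^6 - 903168*sVar^5*lVar^6*Φ^2 - 1032192*sVar^5*lVar^6*Φ^3 + 387072*sVar^5*lVar^6*Φ^4 + 1032192*sVar^5*lVar^6*Φ^5 + 387072*sVar^5*lVar^6*Φ^6 - 3280*sVar^6*lVar^4 + 9296*sVar^6*lVar^4*Φ + 1720*sVar^6*lVar^4*Φ^2 - 264*sVar^6*lVar^4*Φ^3 + 39160*sVar^6*lVar^5 - 142736*sVar^6*lVar^5*Φ + 62968*sVar^6*lVar^5*Φ^2 + 41952*sVar^6*lVar^5*Φ^3 - 10104*sVar^6*lVar^5*Φ^4 - 1744*sVar^6*lVar^5*Φ^5 + 264*sVar^6*lVar^5*Φ^6 + 35072*sVar^6*lVar^6 + 97536*sVar^6*lVar^6*Φ - 615424*sVar^6*lVar^6*Φ^2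 - 5632*sVar^6*lVar^6*Φ^3 + 118016*sVar^6*lVar^6*Φ^4 - 91904*sVar^6*lVar^6*Φ^5 - 53760*sVar^6*lVar^6*Φ^6 + 107520*sVar^6*lVar^7 - 752640*sVar^6*lVar^7*Φ^2 - 860160*sVar^6*lVar^7*Φ^3 + 322560*sVar^6*lVar^7*Φ^4 + 860160*sVar^6*lVar^7*Φ^5 + 322560*sVar^6*lVar^7*Φ^6 - 1288*sVar^7*lVar^5 + 3688*sVar^7*lVar^5*Φ + 528*sVar^7*lVar^5*Φ^2 + 23624*sVar^7*lVar^6 - 84832*sVar^7*lVar^6*Φ + 34816*sVar^7*lVar^6*Φ^2 + 22512*sVar^7*lVar^6*Φ^3 - 3784*sVar^7*lVar^6*Φ^4 - 528*sVar^7*lVar^6*Φ^5 + 31872*sVar^7*lVar^7 + 42240*sVar^7*lVar^7*Φ - 419456*sVar^7*lVar^7*Φ^2 + 512*sVar^7*lVar^7*Φ^3 + 68480*sVar^7*lVar^7*Φ^4 - 42752*sVar^7*lVar^7*Φ^5 - 24960*sVar^7*lVar^7*Φ^6 + 61440*sVar^7*lVar^8 - 430080*sVar^7*lVar^8*Φ^2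 - 491520*sVar^7*lVar^8*Φ^3 + 184320*sVar^7*lVar^8*Φ^4 + 491520*sVar^7*lVar^8*Φ^5 + 184320*sVar^7*lVar^8*Φ^6 - 192*sVar^8*lVar^6 + 576*sVar^8*lVar^6*Φ + 7360*sVar^8*lVar^7 - 26528*sVar^8*lVar^7*Φ + 11264*sVar^8*lVar^7*Φ^2 + 6432*sVar^8*lVar^7*Φ^3 - 576*sVar^8*lVar^7*Φ^4 + 15968*sVar^8*lVar^8 + 10496*sVar^8*lVar^8*Φ - 177568*sVar^8*lVar^8*Φ^2 + 1792*sVar^8*lVar^8*Φ^3 + 20768*sVar^8*lVar^8*Φ^4 - 12288*sVar^8*lVar^8*Φ^5 - 6624*sVar^8*lVar^8*Φ^6 + 23040*sVar^8*lVar^9 - 161280*sVar^8*lVar^9*Φ^2 - 184320*sVar^8*lVar^9*Φ^3 + 69120*sVar^8*lVar^9*Φ^4 + 184320*sVar^8*lVar^9*Φ^5 + 69120*sVar^8*lVar^9*Φ^6 + 896*sVar^9*lVar^8 - 3328*sVar^9*lVar^8*Φ + 1664*sVar^9*lVar^8*Φ^2 + 768*sVar^9*lVar^8*Φ^3 + 4352*sVar^9*lVar^9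 + 1152*sVar^9*lVar^9*Φ - 43008*sVar^9*lVar^9*Φ^2 + 512*sVar^9*lVar^9*Φ^3 + 2560*sVar^9*lVar^9*Φ^4 - 1664*sVar^9*lVar^9*Φ^5 - 768*sVar^9*lVar^9*Φ^6 + 5120*sVar^9*lVar^10 - 35840*sVar^9*lVar^10*Φ^2 - 40960*sVar^9*lVar^10*Φ^3 + 15360*sVar^9*lVar^10*Φ^4 + 40960*sVar^9*lVar^10*Φ^5 + 15360*sVar^9*lVar^10*Φ^6 + 512*sVar^10*lVar^10 - 4608*sVar^10*lVar^10*Φ^2 + 512*sVar^10*lVar^11 - 3584*sVar^10*lVar^11*Φ^2 - 4096*sVar^10*lVar^11*Φ^3 + 1536*sVar^10*lVar^11*Φ^4 + 4096*sVar^10*lVar^11*Φ^5 + 1536*sVar^10*lVar^11*Φ^6) * hΦrel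
      + (-2 + 2*Φ + 12*Φ^2 + 4*Φ^3 - 10*Φ^4 - 6*Φ^5 + 64*lVar - 64*lVar*Φ - 384*lVar*Φ^2 - 128*lVar*Φ^3 + 320*lVar*Φ^4 + 192*lVar*Φ^5 - 512*lVar^2 + 512*lVar^2*Φ + 3072*lVar^2*Φ^2 + 1024*lVar^2*Φ^3 - 2560*lVar^2*Φ^4 - 1536*lVar^2*Φ^5 + 2*sVar*Φ - 6*sVar*Φ^2 - 4*sVar*Φ^3 + 10*sVar*Φ^4 + 6*sVar*Φ^5 - 12*sVar*lVar - 52*sVar*lVar*Φ + 264*sVar*lVar*Φ^2 + 152*sVar*lVar*Φ^3 - 380*sVar*lVar*Φ^4 - 228*sVar*lVar*Φ^5 + 640*sVar*lVar^2 - 128*sVar*lVar^2*Φ - 5376*sVar*lVar^2*Φ^2 - 2304*sVar*lVar^2*Φ^3 + 5760*sVar*lVar^2*Φ^4 + 3456*sVar*lVar^2*Φ^5 - 5120*sVar*lVar^3 + 5120*sVar*lVar^3*Φ + 30720*sVar*lVar^3*Φ^2 + 10240*sVar*lVar^3*Φ^3 - 25600*sVar*lVar^3*Φ^4 - 15360*sVar*lVar^3*Φ^5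 + 2*sVar^2 - 4*sVar^2*Φ - 6*sVar^2*Φ^2 - 70*sVar^2*lVar + 144*sVar^2*lVar*Φ + 198*sVar^2*lVar*Φ^2 - 8*sVar^2*lVar*Φ^3 + 20*sVar^2*lVar*Φ^4 + 12*sVar^2*lVar*Φ^5 + 674*sVar^2*lVar^2 - 1762*sVar^2*lVar^2*Φ - 780*sVar^2*lVar^2*Φ^2 + 828*sVar^2*lVar^2*Φ^3 - 2070*sVar^2*lVar^2*Φ^4 - 1242*sVar^2*lVar^2*Φ^5 + 1280*sVar^2*lVar^3 + 3328*sVar^2*lVar^3*Φ - 21504*sVar^2*lVar^3*Φ^2 - 11776*sVar^2*lVar^3*Φ^3 + 29440*sVar^2*lVar^3*Φ^4 + 17664*sVar^2*lVar^3*Φ^5 - 23040*sVar^2*lVar^4 + 23040*sVar^2*lVar^4*Φ + 138240*sVar^2*lVar^4*Φ^2 + 46080*sVar^2*lVar^4*Φ^3 - 115200*sVar^2*lVar^4*Φ^4 - 69120*sVar^2*lVar^4*Φ^5 + 2*sVar^3*lVar - 4*sVar^3*lVar*Φ - 6*sVar^3*lVar*Φ^2 - 338*sVar^3*lVar^2 +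 678*sVar^3*lVar^2*Φ + 1008*sVar^3*lVar^2*Φ^2 - 4*sVar^3*lVar^2*Φ^3 + 10*sVar^3*lVar^2*Φ^4 + 6*sVar^3*lVar^2*Φ^5 + 3864*sVar^3*lVar^3 - 8664*sVar^3*lVar^3*Φ - 8784*sVar^3*lVar^3*Φ^2 + 1872*sVar^3*lVar^3*Φ^3 - 4680*sVar^3*lVar^3*Φ^4 - 2808*sVar^3*lVar^3*Φ^5 - 3584*sVar^3*lVar^4 + 22016*sVar^3*lVar^4*Φ - 33792*sVar^3*lVar^4*Φ^2 - 29696*sVar^3*lVar^4*Φ^3 + 74240*sVar^3*lVar^4*Φ^4 + 44544*sVar^3*lVar^4*Φ^5 - 61440*sVar^3*lVar^5 + 61440*sVar^3*lVar^5*Φ + 368640*sVar^3*lVar^5*Φ^2 + 122880*sVar^3*lVar^5*Φ^3 - 307200*sVar^3*lVar^5*Φ^4 - 184320*sVar^3*lVar^5*Φ^5 - 596*sVar^4*lVar^3 + 1192*sVar^4*lVar^3*Φ + 1788*sVar^4*lVar^3*Φ^2 + 8994*sVar^4*lVar^4 - 19042*sVar^4*lVar^4*Φ - 23820*sVar^4*lVar^4*Φ^2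 + 2108*sVar^4*lVar^4*Φ^3 - 5270*sVar^4*lVar^4*Φ^4 - 3162*sVar^4*lVar^4*Φ^5 - 21120*sVar^4*lVar^5 + 64128*sVar^4*lVar^5*Φ - 2304*sVar^4*lVar^5*Φ^2 - 43776*sVar^4*lVar^5*Φ^3 + 109440*sVar^4*lVar^5*Φ^4 + 65664*sVar^4*lVar^5*Φ^5 - 107520*sVar^4*lVar^6 + 107520*sVar^4*lVar^6*Φ + 645120*sVar^4*lVar^6*Φ^2 + 215040*sVar^4*lVar^6*Φ^3 - 537600*sVar^4*lVar^6*Φ^4 - 322560*sVar^4*lVar^6*Φ^5 - 458*sVar^5*lVar^4 + 916*sVar^5*lVar^4*Φ + 1374*sVar^5*lVar^4*Φ^2 + 11252*sVar^5*lVar^5 - 23092*sVar^5*lVar^5*Φ - 31992*sVar^5*lVar^5*Φ^2 + 1176*sVar^5*lVar^5*Φ^3 - 2940*sVar^5*lVar^5*Φ^4 - 1764*sVar^5*lVar^5*Φ^5 - 44288*sVar^5*lVar^6 + 108800*sVar^5*lVar^6*Φ + 72192*sVar^5*lVar^6*Φ^2 - 40448*sVar^5*lVar^6*Φ^3 + 101120*sVar^5*lVar^6*Φ^4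 + 60672*sVar^5*lVar^6*Φ^5 - 129024*sVar^5*lVar^7 + 129024*sVar^5*lVar^7*Φ + 774144*sVar^5*lVar^7*Φ^2 + 258048*sVar^5*lVar^7*Φ^3 - 645120*sVar^5*lVar^7*Φ^4 - 387072*sVar^5*lVar^7*Φ^5 - 130*sVar^6*lVar^5 + 260*sVar^6*lVar^5*Φ + 390*sVar^6*lVar^5*Φ^2 + 8254*sVar^6*lVar^6 - 16638*sVar^6*lVar^6*Φ - 24372*sVar^6*lVar^6*Φ^2 + 260*sVar^6*lVar^6*Φ^3 - 650*sVar^6*lVar^6*Φ^4 - 390*sVar^6*lVar^6*Φ^5 - 52480*sVar^6*lVar^7 + 116992*sVar^6*lVar^7*Φ + 121344*sVar^6*lVar^7*Φ^2 - 24064*sVar^6*lVar^7*Φ^3 + 60160*sVar^6*lVar^7*Φ^4 + 36096*sVar^6*lVar^7*Φ^5 - 107520*sVar^6*lVar^8 + 107520*sVar^6*lVar^8*Φ + 645120*sVar^6*lVar^8*Φ^2 + 215040*sVar^6*lVar^8*Φ^3 - 537600*sVar^6*lVar^8*Φ^4 - 322560*sVar^6*lVar^8*Φ^5 + 3648*sVar^7*lVar^7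 - 7296*sVar^7*lVar^7*Φ - 10944*sVar^7*lVar^7*Φ^2 - 38400*sVar^7*lVar^8 + 81408*sVar^7*lVar^8*Φ + 101376*sVar^7*lVar^8*Φ^2 - 9216*sVar^7*lVar^8*Φ^3 + 23040*sVar^7*lVar^8*Φ^4 + 13824*sVar^7*lVar^8*Φ^5 - 61440*sVar^7*lVar^9 + 61440*sVar^7*lVar^9*Φ + 368640*sVar^7*lVar^9*Φ^2 + 122880*sVar^7*lVar^9*Φ^3 - 307200*sVar^7*lVar^9*Φ^4 - 184320*sVar^7*lVar^9*Φ^5 + 960*sVar^8*lVar^8 - 1920*sVar^8*lVar^8*Φ - 2880*sVar^8*lVar^8*Φ^2 - 17344*sVar^8*lVar^9 + 35776*sVar^8*lVar^9*Φ + 48768*sVar^8*lVar^9*Φ^2 - 2176*sVar^8*lVar^9*Φ^3 + 5440*sVar^8*lVar^9*Φ^4 + 3264*sVar^8*lVar^9*Φ^5 - 23040*sVar^8*lVar^10 + 23040*sVar^8*lVar^10*Φ + 138240*sVar^8*lVar^10*Φ^2 + 46080*sVar^8*lVar^10*Φ^3 - 115200*sVar^8*lVar^10*Φ^4 - 69120*sVar^8*lVar^10*Φ^5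 + 128*sVar^9*lVar^9 - 256*sVar^9*lVar^9*Φ - 384*sVar^9*lVar^9*Φ^2 - 4480*sVar^9*lVar^10 + 9088*sVar^9*lVar^10*Φ + 13056*sVar^9*lVar^10*Φ^2 - 256*sVar^9*lVar^10*Φ^3 + 640*sVar^9*lVar^10*Φ^4 + 384*sVar^9*lVar^10*Φ^5 - 5120*sVar^9*lVar^11 + 5120*sVar^9*lVar^11*Φ + 30720*sVar^9*lVar^11*Φ^2 + 10240*sVar^9*lVar^11*Φ^3 - 25600*sVar^9*lVar^11*Φ^4 - 15360*sVar^9*lVar^11*Φ^5 - 512*sVar^10*lVar^11 + 1024*sVar^10*lVar^11*Φ + 1536*sVar^10*lVar^11*Φ^2 - 512*sVar^10*lVar^12 + 512*sVar^10*lVar^12*Φ + 3072*sVar^10*lVar^12*Φ^2 + 1024*sVar^10*lVar^12*Φ^3 - 2560*sVar^10*lVar^12*Φ^4 - 1536*sVar^10*lVar^12*Φ^5) * hDP
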